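/- Let p be a prime and n a natural number. The module of Kähler differentials Ω_{ℤ_p[p^{1/p^n}]/ℤ_p} is isomorphic as a ℤ_p[p^{1/p^n}]-module to ℤ_p[p^{1/p^n}]/(p^n · p^{1-1/p^n}), generated by d(p^{1/p^n}). -/
import Mathlib

namespace StmtAux
open Polynomial
variable {k : Type*} [CommRing k] (f : k[X])

local notation "R" => AdjoinRoot f
local notation "α" => AdjoinRoot.root f

noncomputable def cgen : AdjoinRoot f := aeval (AdjoinRoot.root f) (derivative f)

-- k-linear map k[X] → R/(c)
noncomputable def Lmap : k[X] →ₗ[k] (R ⧸ Ideal.span {cgen f}) :=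
  ((Submodule.mkQ (Ideal.span {cgen f})).restrictScalars k) ∘ₗ
    (aeval (AdjoinRoot.root f)).toLinearMap ∘ₗ
    (Polynomial.derivative.restrictScalars k)

lemma Lmap_ker : (Ideal.span {f}).restrictScalars k ≤ LinearMap.ker (Lmap f) := by
  intro x hx
  simp only [Submodule.restrictScalars_mem, Ideal.mem_span_singleton] at hx
  obtain ⟨g, rfl⟩ := hx
  simp only [LinearMap.mem_ker, Lmap, LinearMap.coe_comp, Function.comp_apply,
    LinearMap.coe_restrictScalars, AlgHom.toLinearMap_apply, derivative_mul, map_add, map_mul,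
    AdjoinRoot.aeval_eq, AdjoinRoot.mk_self, zero_mul, add_zero, Submodule.mkQ_apply]
  rw [Submodule.Quotient.mk_eq_zero]
  exact Ideal.mul_mem_right _ _ (Ideal.subset_span (by simp [cgen, AdjoinRoot.aeval_eq]))

noncomputable def dfun : R →ₗ[k] (R ⧸ Ideal.span {cgen f}) :=
  (Submodule.liftQ ((Ideal.span {f}).restrictScalars k) (Lmap f) (Lmap_ker f)) ∘ₗ
    (Submodule.Quotient.restrictScalarsEquiv k (Ideal.span {f})).symm.toLinearMap

lemma dfun_mk (P : k[X]) :
    dfun f (AdjoinRoot.mk f P) =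
      Submodule.Quotient.mk (aeval (AdjoinRoot.root f) (derivative P)) := by
  rfl

noncomputable def dDer : Derivation k R (R ⧸ Ideal.span {cgen f}) where
  toLinearMap := dfun f
  map_one_eq_zero' := by
    have := dfun_mk f 1
    simpa using this
  leibniz' x y := by
    obtain ⟨P, rfl⟩ := AdjoinRoot.mk_surjective x
    obtain ⟨Q, rfl⟩ := AdjoinRoot.mk_surjective y
    rw [← map_mul, dfun_mk, dfun_mk, dfun_mk, derivative_mul]
    simp only [map_add, map_mul, Submodule.Quotient.mk_add]
    rw [← Submodule.Quotient.mk_smul, ← Submodule.Quotient.mk_smul]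
    rw [← Submodule.Quotient.mk_add]
    congr 1
    simp only [smul_eq_mul, AdjoinRoot.aeval_eq, map_add, map_mul]
    ring

lemma dDer_apply (P : k[X]) : dDer f (AdjoinRoot.mk f P) =
    Submodule.Quotient.mk (aeval (AdjoinRoot.root f) (derivative P)) := dfun_mk f P

lemma dDer_root : dDer f α = Submodule.Quotient.mk 1 := by
  have := dDer_apply f X
  simpa using this

lemma cgen_smul_D : (cgen f) • KaehlerDifferential.D k R α = 0 := by
  have h0 : aeval (AdjoinRoot.root f) f = 0 := by
    simp [AdjoinRoot.aeval_eq, AdjoinRoot.mk_self]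
  have h := Derivation.map_aeval (KaehlerDifferential.D k R) f (AdjoinRoot.root f)
  rw [h0, map_zero] at h
  exact (h.symm : _)

noncomputable def ψmap : (R ⧸ Ideal.span {cgen f}) →ₗ[R] Ω[R⁄k] :=
  Submodule.liftQ (Ideal.span {cgen f})
    (LinearMap.toSpanSingleton R _ (KaehlerDifferential.D k R (AdjoinRoot.root f)))
    (by
      rw [Ideal.span, Submodule.span_le, Set.singleton_subset_iff]
      simpa [LinearMap.toSpanSingleton] using cgen_smul_D f)

noncomputable def φmap : Ω[R⁄k] →ₗ[R] (R ⧸ Ideal.span {cgen f}) :=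
  (dDer f).liftKaehlerDifferential

lemma φmap_D (x : R) : φmap f (KaehlerDifferential.D k R x) = dDer f x :=
  Derivation.liftKaehlerDifferential_comp_D _ _

noncomputable def theEquiv : (R ⧸ Ideal.span {cgen f}) ≃ₗ[R] Ω[R⁄k] :=
  LinearEquiv.ofLinear (ψmap f) (φmap f)
    (by
      apply Derivation.liftKaehlerDifferential_unique
      ext x
      obtain ⟨P, rfl⟩ := AdjoinRoot.mk_surjective x
      simp only [Derivation.coe_comp, LinearMap.coe_comp, Function.comp_apply,
        LinearMap.id_coe, id_eq, Derivation.coeFn_coe, LinearMap.coe_restrictScalars]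
      rw [φmap_D, dDer_apply, ψmap]
      rw [Submodule.liftQ_apply, LinearMap.toSpanSingleton_apply]
      rw [← AdjoinRoot.aeval_eq, Derivation.map_aeval])
    (by
      apply Submodule.linearMap_qext
      ext
      simp only [LinearMap.coe_comp, Function.comp_apply, LinearMap.id_coe, id_eq,
        Submodule.mkQ_apply]
      rw [ψmap, Submodule.liftQ_apply, LinearMap.toSpanSingleton_apply, map_smul, φmap,
        ← AdjoinRoot.mk_X (f := f), Derivation.liftKaehlerDifferential_comp_D, dDer_apply]
      simp only [derivative_X]
      rw [map_one, ← Submodule.Quotient.mk_smul, smul_eq_mul, mul_one])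

lemma theEquiv_one : theEquiv f 1 = KaehlerDifferential.D k R (AdjoinRoot.root f) := by
  have : (1 : R ⧸ Ideal.span {cgen f}) = Submodule.Quotient.mk 1 := rfl
  rw [theEquiv, this, LinearEquiv.ofLinear_apply, ψmap, Submodule.liftQ_apply,
    LinearMap.toSpanSingleton_apply, one_smul]


lemma exists_equiv (g : R) (hg : g = cgen f) :
    ∃ e : (R ⧸ Ideal.span {g}) ≃ₗ[R] Ω[R⁄k],
      e 1 = KaehlerDifferential.D k R (AdjoinRoot.root f) := by
  subst hg; exact ⟨theEquiv f, theEquiv_one f⟩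

end StmtAux

open Polynomial in
/-- Let `p` be a prime and `n : ℕ`.  Writing `ℤ_p[p^{1/pⁿ}] = ℤ_p[X]/(X^{pⁿ} - p)` (with
`p^{1/pⁿ}` the class of `X`), the module of Kähler differentials `Ω[ℤ_p[p^{1/pⁿ}]⁄ℤ_p]` is
isomorphic as a `ℤ_p[p^{1/pⁿ}]`-module to `ℤ_p[p^{1/pⁿ}]/(pⁿ · p^{1 - 1/pⁿ})`, generated by
`d(p^{1/pⁿ})` (the image of `1` under the isomorphism). -/
theorem stmt_1 (p : ℕ) [Fact p.Prime] (n : ℕ) :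
    letI R := AdjoinRoot ((X : Polynomial ℤ_[p]) ^ (p ^ n) - C (p : ℤ_[p]))
    letI α : R := AdjoinRoot.root _
    ∃ e : (R ⧸ Ideal.span {(p : R) ^ n * α ^ (p ^ n - 1)}) ≃ₗ[R] Ω[R⁄ℤ_[p]],
      e 1 = KaehlerDifferential.D ℤ_[p] R α := by
  refine StmtAux.exists_equiv _ _ ?_
  simp only [StmtAux.cgen, derivative_sub, derivative_X_pow, derivative_C, sub_zero, map_mul,
    map_pow, aeval_X, aeval_C]
  push_cast
  ring
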